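/- (Theorem 2.1) Suppose the edge set E forms a tree on Fin n. Given univariate pmfs μ_i on C i for each i ∈ Fin n and bivariate pmfs μ_{ij} on C i × C j for each (i,j) ∈ E, for every ρ ≥ 0 the following are equivalent: (a) there exist a joint distribution θ and bivariate pmfs θ_{ij} on C i × C j for (i,j) ∈ E such that proj_i θ = μ_i for all i, proj_{ij} θ = θ_{ij} for all (i,j) ∈ E, and for every (i,j) ∈ E, θ_{ij} vanishes wherever μ_{ij} vanishes and I_KL(θ_{ij}, μ_{ij}) ≤ ρ; (b) there exist bivariate pmfs θ_{ij} on C i × C j for (i,j) ∈ E such that for every (i,j) ∈ E, Σ_y θ_{ij}(x,y) = μ_i(x) for all x ∈ C i, Σ_x θ_{ij}(x,y) = μ_j(y) for all y ∈ C j, θ_{ij} vanishes wherever μ_{ij} vanishes, and I_KL(θ_{ij}, μ_{ij}) ≤ ρ. Consequently, the infimum of the set of ρ ≥ 0 satisfying (a) equals the infimum of the set of ρ ≥ 0 satisfying (b). -/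

import Mathlib

open Finset

noncomputable section

abbrev Pt {n : ℕ} (C : Fin n → Finset ℝ) := (i : Fin n) → {x : ℝ // x ∈ C i}

def IsJoint {n : ℕ} {C : Fin n → Finset ℝ} (θ : Pt C → ℝ) : Prop :=
  (∀ c, 0 ≤ θ c) ∧ ∑ c : Pt C, θ c = 1

def projUni {n : ℕ} {C : Fin n → Finset ℝ} (θ : Pt C → ℝ) (i : Fin n)
    (x : {x : ℝ // x ∈ C i}) : ℝ :=
  ∑ c : Pt C, if c i = x then θ c else 0

def projBi {n : ℕ} {C : Fin n → Finset ℝ} (θ : Pt C → ℝ) (i j : Fin n)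
    (p : {x : ℝ // x ∈ C i} × {y : ℝ // y ∈ C j}) : ℝ :=
  ∑ c : Pt C, if c i = p.1 ∧ c j = p.2 then θ c else 0

def IsPmf {S : Type*} [Fintype S] (p : S → ℝ) : Prop :=
  (∀ s, 0 ≤ p s) ∧ ∑ s, p s = 1

def KL {S : Type*} [Fintype S] (p q : S → ℝ) : ℝ :=
  ∑ s, if 0 < p s then p s * Real.log (p s / q s) else 0

def Vanishes {S : Type*} (p q : S → ℝ) : Prop := ∀ s, q s = 0 → p s = 0

def treeGraph {n : ℕ} (E : Finset (Fin n × Fin n)) : SimpleGraph (Fin n) :=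
  SimpleGraph.fromRel (fun i j => (i, j) ∈ E)

def IsTreeEdges {n : ℕ} (E : Finset (Fin n × Fin n)) : Prop :=
  (∀ e ∈ E, e.1 < e.2) ∧ (treeGraph E).IsTree

def psi {n : ℕ} {C : Fin n → Finset ℝ} {K : ℕ} (a : Fin K → Fin n → ℝ) (b : Fin K → ℝ)
    (c : Pt C) : ℝ :=
  ⨆ k : Fin K, (∑ i, a k i * (c i : ℝ) + b k)

def InTheta {n : ℕ} {C : Fin n → Finset ℝ} (E : Finset (Fin n × Fin n))
    (μU : (i : Fin n) → {x : ℝ // x ∈ C i} → ℝ)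
    (μB : (i j : Fin n) → ({x : ℝ // x ∈ C i} × {y : ℝ // y ∈ C j}) → ℝ)
    (ρ : ℝ) (θ : Pt C → ℝ) : Prop :=
  IsJoint θ ∧ (∀ i, projUni θ i = μU i) ∧
  ∀ i j, (i, j) ∈ E →
    Vanishes (projBi θ i j) (μB i j) ∧ KL (projBi θ i j) (μB i j) ≤ ρ

/-- Feasibility of (a) in Theorem 2.1: there is a joint distribution with the given
univariate marginals whose bivariate marginals on the edges lie within KL-distance `ρ`
of the given bivariate marginals. -/
def FeasA {n : ℕ} {C : Fin n → Finset ℝ} (E : Finset (Fin n × Fin n))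
    (μU : (i : Fin n) → {x : ℝ // x ∈ C i} → ℝ)
    (μB : (i j : Fin n) → ({x : ℝ // x ∈ C i} × {y : ℝ // y ∈ C j}) → ℝ)
    (ρ : ℝ) : Prop :=
  ∃ (θ : Pt C → ℝ)
    (θB : (i j : Fin n) → ({x : ℝ // x ∈ C i} × {y : ℝ // y ∈ C j}) → ℝ),
    IsJoint θ ∧
    (∀ i, projUni θ i = μU i) ∧
    (∀ i j, (i, j) ∈ E → IsPmf (θB i j)) ∧
    (∀ i j, (i, j) ∈ E → projBi θ i j = θB i j) ∧
    (∀ i j, (i, j) ∈ E → Vanishes (θB i j) (μB i j)) ∧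
    (∀ i j, (i, j) ∈ E → KL (θB i j) (μB i j) ≤ ρ)

/-- Feasibility of (b) in Theorem 2.1: there are bivariate pmfs on the edges that are
consistent with the given univariate marginals and lie within KL-distance `ρ` of the
given bivariate marginals. -/
def FeasB {n : ℕ} {C : Fin n → Finset ℝ} (E : Finset (Fin n × Fin n))
    (μU : (i : Fin n) → {x : ℝ // x ∈ C i} → ℝ)
    (μB : (i j : Fin n) → ({x : ℝ // x ∈ C i} × {y : ℝ // y ∈ C j}) → ℝ)
    (ρ : ℝ) : Prop :=
  ∃ θB : (i j : Fin n) → ({x : ℝ // x ∈ C i} × {y : ℝ // y ∈ C j}) → ℝ,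
    (∀ i j, (i, j) ∈ E → IsPmf (θB i j)) ∧
    (∀ i j, (i, j) ∈ E → ∀ x : {x : ℝ // x ∈ C i},
      ∑ y : {y : ℝ // y ∈ C j}, θB i j (x, y) = μU i x) ∧
    (∀ i j, (i, j) ∈ E → ∀ y : {y : ℝ // y ∈ C j},
      ∑ x : {x : ℝ // x ∈ C i}, θB i j (x, y) = μU j y) ∧
    (∀ i j, (i, j) ∈ E → Vanishes (θB i j) (μB i j)) ∧
    (∀ i j, (i, j) ∈ E → KL (θB i j) (μB i j) ≤ ρ)

section DevAux
variable {n : ℕ} {C : Fin n → Finset ℝ}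

lemma sum_relabel (ℓ : Fin n) (y z : {x : ℝ // x ∈ C ℓ}) (F : Pt C → ℝ)
    (hF : ∀ c w, F (Function.update c ℓ w) = F c) :
    ∑ c : Pt C, (if c ℓ = y then F c else 0) = ∑ c : Pt C, (if c ℓ = z then F c else 0) := by
  classical
  rw [← Finset.sum_filter, ← Finset.sum_filter]
  apply Finset.sum_nbij' (i := fun c => Function.update c ℓ z) (j := fun c => Function.update c ℓ y)
  · intro c hc; simp [Function.update_self]
  · intro c hc; simp [Function.update_self]
  · intro c hc
    simp only [mem_filter, mem_univ, true_and] at hc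
    rw [Function.update_idem, ← hc, Function.update_eq_self]
  · intro c hc
    simp only [mem_filter, mem_univ, true_and] at hc
    rw [Function.update_idem, ← hc, Function.update_eq_self]
  · intro c hc; rw [hF]

lemma sum_step (ℓ : Fin n) (z : {x : ℝ // x ∈ C ℓ}) (g : Pt C → ℝ)
    (h : Pt C → {x : ℝ // x ∈ C ℓ} → ℝ)
    (hg : ∀ c w, g (Function.update c ℓ w) = g c)
    (hh : ∀ c w y, h (Function.update c ℓ w) y = h c y) :
    ∑ c : Pt C, g c * h c (c ℓ) =
      ∑ c : Pt C, (if c ℓ = z then g c * ∑ y, h c y else 0) := by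
  classical
  have e1 : ∀ c : Pt C, g c * h c (c ℓ) = ∑ y, if c ℓ = y then g c * h c y else 0 := by
    intro c; rw [Finset.sum_ite_eq]; simp
  calc ∑ c : Pt C, g c * h c (c ℓ)
      = ∑ c : Pt C, ∑ y, if c ℓ = y then g c * h c y else 0 :=
        Finset.sum_congr rfl fun c _ => e1 c
    _ = ∑ y, ∑ c : Pt C, if c ℓ = y then g c * h c y else 0 := Finset.sum_comm
    _ = ∑ y, ∑ c : Pt C, if c ℓ = z then g c * h c y else 0 := by
        refine Finset.sum_congr rfl fun y _ => ?_
        exact sum_relabel ℓ y z _ (fun c w => by rw [hg, hh])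
    _ = ∑ c : Pt C, ∑ y, if c ℓ = z then g c * h c y else 0 := Finset.sum_comm
    _ = ∑ c : Pt C, (if c ℓ = z then g c * ∑ y, h c y else 0) := by
        refine Finset.sum_congr rfl fun c _ => ?_
        by_cases hc : c ℓ = z
        · simp [hc, Finset.mul_sum]
        · simp [hc]

lemma lemA (r : Fin n) (p : Fin n → Fin n) (dep : Fin n → ℕ)
    (hdep : ∀ i, i ≠ r → dep (p i) + 1 = dep i)
    (μr : {x : ℝ // x ∈ C r} → ℝ)
    (K : (i : Fin n) → {x : ℝ // x ∈ C (p i)} → {y : ℝ // y ∈ C i} → ℝ)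
    (hKsum : ∀ i, i ≠ r → ∀ x, ∑ y, K i x y = 1) :
    ∀ (S U : Finset (Fin n)), S ⊆ U → (∀ i ∈ U, i ≠ r) →
      (∀ j ∈ U, j ∉ S → p j ∉ S) → ∀ (c₀ : Pt C),
    ∑ c : Pt C, (if ∀ i, i ∉ S → c i = c₀ i
        then μr (c r) * ∏ i ∈ U, K i (c (p i)) (c i) else 0)
      = μr (c₀ r) * ∏ i ∈ U \ S, K i (c₀ (p i)) (c₀ i) := by
  classical
  intro S
  induction S using Finset.strongInduction with
  | _ S IH =>
  intro U hSU hUr hstar c₀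
  rcases S.eq_empty_or_nonempty with rfl | hne
  · have hcond : ∀ c : Pt C, (∀ i, i ∉ (∅ : Finset (Fin n)) → c i = c₀ i) ↔ c = c₀ := by
      intro c
      constructor
      · intro h; funext i; exact h i (by simp)
      · rintro rfl; intro i _; rfl
    rw [Finset.sdiff_empty]
    calc ∑ c : Pt C, (if ∀ i, i ∉ (∅ : Finset (Fin n)) → c i = c₀ i
          then μr (c r) * ∏ i ∈ U, K i (c (p i)) (c i) else 0)
        = ∑ c : Pt C, (if c = c₀ then μr (c r) * ∏ i ∈ U, K i (c (p i)) (c i) else 0) := by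
          refine Finset.sum_congr rfl fun c _ => ?_
          exact if_congr (hcond c) rfl rfl
      _ = μr (c₀ r) * ∏ i ∈ U, K i (c₀ (p i)) (c₀ i) := by
          rw [Finset.sum_ite_eq' Finset.univ c₀]; simp
  · obtain ⟨ℓ, hℓS, hmax⟩ := S.exists_max_image dep hne
    have hℓU : ℓ ∈ U := hSU hℓS
    have hℓr : ℓ ≠ r := hUr ℓ hℓU
    have hpne : ∀ i : Fin n, i ≠ r → p i ≠ i := by
      intro i hir h
      have := hdep i hir
      rw [h] at this
      omega
    have hpℓ : p ℓ ≠ ℓ := hpne ℓ hℓr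
    have noch : ∀ i ∈ U, i ≠ ℓ → p i ≠ ℓ := by
      intro i hiU hiℓ h
      have hir : i ≠ r := hUr i hiU
      have hdi : dep i = dep ℓ + 1 := by rw [← hdep i hir, h]
      by_cases hiS : i ∈ S
      · have := hmax i hiS; omega
      · exact (hstar i hiU hiS) (h ▸ hℓS)
    set g : Pt C → ℝ := fun c =>
      if ∀ i, i ∉ S → c i = c₀ i
      then μr (c r) * ∏ i ∈ U.erase ℓ, K i (c (p i)) (c i) else 0 with hg_def
    have hsummand : ∀ c : Pt C,
        (if ∀ i, i ∉ S → c i = c₀ i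
          then μr (c r) * ∏ i ∈ U, K i (c (p i)) (c i) else 0)
        = g c * K ℓ (c (p ℓ)) (c ℓ) := by
      intro c
      rw [hg_def]
      simp only
      rw [ite_mul, zero_mul]
      congr 1
      rw [← Finset.mul_prod_erase U _ hℓU]
      ring
    have hginv : ∀ c w, g (Function.update c ℓ w) = g c := by
      intro c w
      rw [hg_def]
      simp only
      have hcnd : (∀ i, i ∉ S → Function.update c ℓ w i = c₀ i) ↔ (∀ i, i ∉ S → c i = c₀ i) := by
        constructor <;> intro h i hi
        · have hne' : i ≠ ℓ := fun h' => hi (by rwa [h'])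
          have := h i hi
          rwa [Function.update_of_ne hne'] at this
        · rw [Function.update_of_ne (fun h' => hi (by rwa [h']))]
          exact h i hi
      rw [if_congr hcnd rfl rfl]
      congr 1
      rw [Function.update_of_ne (Ne.symm hℓr)]
      congr 1
      refine Finset.prod_congr rfl fun i hi => ?_
      have hiU : i ∈ U := Finset.mem_of_mem_erase hi
      have hiℓ : i ≠ ℓ := Finset.ne_of_mem_erase hi
      rw [Function.update_of_ne hiℓ, Function.update_of_ne (noch i hiU hiℓ)]
    have step := sum_step ℓ (c₀ ℓ) g (fun c y => K ℓ (c (p ℓ)) y) hginv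
      (fun c w y => by rw [Function.update_of_ne hpℓ])
    calc ∑ c : Pt C, (if ∀ i, i ∉ S → c i = c₀ i
          then μr (c r) * ∏ i ∈ U, K i (c (p i)) (c i) else 0)
        = ∑ c : Pt C, g c * K ℓ (c (p ℓ)) (c ℓ) :=
          Finset.sum_congr rfl fun c _ => hsummand c
      _ = ∑ c : Pt C, (if c ℓ = c₀ ℓ then g c * ∑ y, K ℓ (c (p ℓ)) y else 0) := step
      _ = ∑ c : Pt C, (if ∀ i, i ∉ S.erase ℓ → c i = c₀ i
            then μr (c r) * ∏ i ∈ U.erase ℓ, K i (c (p i)) (c i) else 0) := by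
          refine Finset.sum_congr rfl fun c _ => ?_
          rw [hKsum ℓ hℓr, mul_one, hg_def]
          simp only
          by_cases h1 : c ℓ = c₀ ℓ
          · rw [if_pos h1]
            by_cases h2 : ∀ i, i ∉ S → c i = c₀ i
            · have h3 : ∀ i, i ∉ S.erase ℓ → c i = c₀ i := by
                intro i hi
                by_cases hiℓ : i = ℓ
                · exact hiℓ ▸ h1
                · exact h2 i (fun hiS => hi (Finset.mem_erase.2 ⟨hiℓ, hiS⟩))
              rw [if_pos h2, if_pos h3]
            · have h3 : ¬ ∀ i, i ∉ S.erase ℓ → c i = c₀ i := by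
                intro h3
                exact h2 fun i hi => h3 i (fun h' => hi (Finset.mem_of_mem_erase h'))
              rw [if_neg h2, if_neg h3]
          · have h3 : ¬ ∀ i, i ∉ S.erase ℓ → c i = c₀ i := by
              intro h3
              exact h1 (h3 ℓ (by simp))
            rw [if_neg h1, if_neg h3]
      _ = μr (c₀ r) * ∏ i ∈ (U.erase ℓ) \ (S.erase ℓ), K i (c₀ (p i)) (c₀ i) := by
          apply IH (S.erase ℓ) (Finset.erase_ssubset hℓS)
          · intro i hi
            exact Finset.mem_erase.2 ⟨Finset.ne_of_mem_erase hi,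
              hSU (Finset.mem_of_mem_erase hi)⟩
          · intro i hi; exact hUr i (Finset.mem_of_mem_erase hi)
          · intro j hjU hjS
            have hjℓ : j ≠ ℓ := Finset.ne_of_mem_erase hjU
            have hjU' : j ∈ U := Finset.mem_of_mem_erase hjU
            have hjS' : j ∉ S := by
              intro h
              exact hjS (Finset.mem_erase.2 ⟨hjℓ, h⟩)
            intro h
            exact hstar j hjU' hjS' (Finset.mem_of_mem_erase h)
      _ = μr (c₀ r) * ∏ i ∈ U \ S, K i (c₀ (p i)) (c₀ i) := by
          congr 1
          apply Finset.prod_congr _ fun _ _ => rfl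
          ext a
          simp only [Finset.mem_sdiff, Finset.mem_erase]
          constructor
          · rintro ⟨⟨haℓ, haU⟩, ha2⟩
            exact ⟨haU, fun haS => ha2 ⟨haℓ, haS⟩⟩
          · rintro ⟨haU, haS⟩
            have haℓ : a ≠ ℓ := fun h => haS (by rwa [h])
            exact ⟨⟨haℓ, haU⟩, fun h => haS h.2⟩

def MargC (θ : Pt C → ℝ) (S : Finset (Fin n)) (γ : Pt C) : ℝ :=
  ∑ c : Pt C, if ∀ j, j ∉ S → c j = γ j then θ c else 0

-- F3
lemma margC_tower (θ : Pt C → ℝ) (S S' : Finset (Fin n)) (hS : S' ⊆ S) (γ : Pt C) :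
    MargC θ S γ = ∑ δ : Pt C,
      if (∀ j, j ∉ S → δ j = γ j) ∧ (∀ j ∈ S', δ j = γ j) then MargC θ S' δ else 0 := by
  classical
  unfold MargC
  have push : ∀ δ : Pt C,
      (if (∀ j, j ∉ S → δ j = γ j) ∧ (∀ j ∈ S', δ j = γ j)
        then ∑ c : Pt C, (if ∀ j, j ∉ S' → c j = δ j then θ c else 0) else 0)
      = ∑ c : Pt C, (if (∀ j, j ∉ S → δ j = γ j) ∧ (∀ j ∈ S', δ j = γ j)
          then (if ∀ j, j ∉ S' → c j = δ j then θ c else 0) else 0) := by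
    intro δ; split <;> simp
  rw [Finset.sum_congr rfl fun δ _ => push δ, Finset.sum_comm]
  refine Finset.sum_congr rfl fun c _ => ?_
  by_cases hc : ∀ j, j ∉ S → c j = γ j
  · rw [if_pos hc]
    set δ₀ : Pt C := fun j => if j ∈ S' then γ j else c j with hδ₀
    rw [Finset.sum_eq_single_of_mem δ₀ (Finset.mem_univ _)]
    · have c1 : ∀ j, j ∉ S → δ₀ j = γ j := by
        intro j hj
        have : j ∉ S' := fun h => hj (hS h)
        simp only [hδ₀, if_neg this]
        exact hc j hj
      have c2 : ∀ j ∈ S', δ₀ j = γ j := fun j hj => by simp only [hδ₀, if_pos hj]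
      have c3 : ∀ j, j ∉ S' → c j = δ₀ j := fun j hj => by simp only [hδ₀, if_neg hj]
      rw [if_pos ⟨c1, c2⟩, if_pos c3]
    · intro δ _ hδ
      by_cases h1 : (∀ j, j ∉ S → δ j = γ j) ∧ (∀ j ∈ S', δ j = γ j)
      · rw [if_pos h1]
        have h2 : ¬ ∀ j, j ∉ S' → c j = δ j := by
          intro h2
          apply hδ
          funext j
          by_cases hj : j ∈ S'
          · rw [h1.2 j hj]; simp only [hδ₀, if_pos hj]
          · rw [← h2 j hj]; simp only [hδ₀, if_neg hj]
        rw [if_neg h2]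
      · rw [if_neg h1]
  · rw [if_neg hc]
    refine (Finset.sum_eq_zero fun δ _ => ?_).symm
    by_cases h1 : (∀ j, j ∉ S → δ j = γ j) ∧ (∀ j ∈ S', δ j = γ j)
    · rw [if_pos h1]
      have h2 : ¬ ∀ j, j ∉ S' → c j = δ j := by
        intro h2
        apply hc
        intro j hj
        rw [h2 j (fun h => hj (hS h))]
        exact h1.1 j hj
      rw [if_neg h2]
    · rw [if_neg h1]

-- F2
lemma margC_split (θ : Pt C → ℝ) (S : Finset (Fin n)) (ℓ : Fin n) (hℓ : ℓ ∈ S) (γ : Pt C) :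
    MargC θ S γ = ∑ y : {x : ℝ // x ∈ C ℓ}, MargC θ (S.erase ℓ) (Function.update γ ℓ y) := by
  classical
  unfold MargC
  rw [Finset.sum_comm]
  refine Finset.sum_congr rfl fun c _ => ?_
  have key : ∀ y : {x : ℝ // x ∈ C ℓ},
      (∀ j, j ∉ S.erase ℓ → c j = Function.update γ ℓ y j) ↔
      (c ℓ = y ∧ ∀ j, j ∉ S → c j = γ j) := by
    intro y
    constructor
    · intro h
      constructor
      · have := h ℓ (by simp)
        rwa [Function.update_self] at this
      · intro j hj
        have hjℓ : j ≠ ℓ := fun h' => hj (by rwa [h'])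
        have := h j (fun h' => hj (Finset.mem_of_mem_erase h'))
        rwa [Function.update_of_ne hjℓ] at this
    · rintro ⟨h1, h2⟩ j hj
      by_cases hjℓ : j = ℓ
      · subst hjℓ; rwa [Function.update_self]
      · rw [Function.update_of_ne hjℓ]
        exact h2 j (fun h' => hj (Finset.mem_erase.2 ⟨hjℓ, h'⟩))
  calc (if ∀ j, j ∉ S → c j = γ j then θ c else 0)
      = ∑ y : {x : ℝ // x ∈ C ℓ}, if c ℓ = y ∧ (∀ j, j ∉ S → c j = γ j) then θ c else 0 := by
        by_cases h2 : ∀ j, j ∉ S → c j = γ j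
        · rw [if_pos h2]
          have e : ∀ y : {x : ℝ // x ∈ C ℓ},
              (if c ℓ = y ∧ (∀ j, j ∉ S → c j = γ j) then θ c else 0)
              = (if c ℓ = y then θ c else 0) :=
            fun y => if_congr (and_iff_left h2) rfl rfl
          rw [Finset.sum_congr rfl fun y _ => e y, Finset.sum_ite_eq]
          simp
        · rw [if_neg h2]
          refine (Finset.sum_eq_zero fun y _ => ?_).symm
          rw [if_neg (fun h => h2 h.2)]
    _ = ∑ y : {x : ℝ // x ∈ C ℓ},
          if ∀ j, j ∉ S.erase ℓ → c j = Function.update γ ℓ y j then θ c else 0 :=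
        Finset.sum_congr rfl fun y _ => (if_congr (key y) rfl rfl).symm

def ancA (r : Fin n) (p : Fin n → Fin n) : ℕ → Fin n → Finset (Fin n)
  | 0, i => {i}
  | k+1, i => if i = r then {i} else insert i (ancA r p k (p i))

variable {r : Fin n} {p : Fin n → Fin n} {dep : Fin n → ℕ}

def Anc (r : Fin n) (p : Fin n → Fin n) (dep : Fin n → ℕ) (i : Fin n) : Finset (Fin n) :=
  ancA r p (dep i) i

section AncLemmas
variable (hdep : ∀ i, i ≠ r → dep (p i) + 1 = dep i)
include hdep

lemma anc_r : Anc r p dep r = {r} := by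
  unfold Anc
  cases h : dep r with
  | zero => rfl
  | succ k => simp [ancA]

lemma anc_ne {i : Fin n} (hi : i ≠ r) : Anc r p dep i = insert i (Anc r p dep (p i)) := by
  unfold Anc
  rw [← hdep i hi]
  simp [ancA, hi]

lemma dep_pos {i : Fin n} (hi : i ≠ r) : 0 < dep i := by
  have := hdep i hi; omega

lemma anc_mem_self (i : Fin n) : i ∈ Anc r p dep i := by
  by_cases hi : i = r
  · subst hi; rw [anc_r hdep]; exact Finset.mem_singleton_self _
  · rw [anc_ne hdep hi]; exact Finset.mem_insert_self _ _

lemma anc_dep_aux : ∀ (k : ℕ) (i : Fin n), dep i ≤ k → ∀ j ∈ Anc r p dep i, dep j ≤ dep i := by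
  intro k
  induction k with
  | zero =>
    intro i hk j hj
    have hi : i = r := by
      by_contra hi
      have := dep_pos hdep hi; omega
    subst hi
    rw [anc_r hdep] at hj
    rw [Finset.mem_singleton.1 hj]
  | succ k IH =>
    intro i hk j hj
    by_cases hi : i = r
    · subst hi; rw [anc_r hdep] at hj; rw [Finset.mem_singleton.1 hj]
    · rw [anc_ne hdep hi] at hj
      rcases Finset.mem_insert.1 hj with rfl | hj
      · exact le_rfl
      · have hd : dep (p i) + 1 = dep i := hdep i hi
        exact le_trans (IH (p i) (by omega) j hj) (by omega)

lemma anc_dep (i : Fin n) : ∀ j ∈ Anc r p dep i, dep j ≤ dep i :=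
  anc_dep_aux hdep (dep i) i le_rfl

lemma anc_root_aux : ∀ (k : ℕ) (i : Fin n), dep i ≤ k → r ∈ Anc r p dep i := by
  intro k
  induction k with
  | zero =>
    intro i hk
    have hi : i = r := by
      by_contra hi
      have := dep_pos hdep hi; omega
    subst hi; rw [anc_r hdep]; exact Finset.mem_singleton_self _
  | succ k IH =>
    intro i hk
    by_cases hi : i = r
    · subst hi; rw [anc_r hdep]; exact Finset.mem_singleton_self _
    · rw [anc_ne hdep hi]
      have := hdep i hi
      exact Finset.mem_insert_of_mem (IH (p i) (by omega))

lemma anc_root (i : Fin n) : r ∈ Anc r p dep i := anc_root_aux hdep (dep i) i le_rfl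

lemma anc_closed_aux : ∀ (k : ℕ) (i : Fin n), dep i ≤ k →
    ∀ j ∈ Anc r p dep i, j ≠ r → p j ∈ Anc r p dep i := by
  intro k
  induction k with
  | zero =>
    intro i hk j hj hjr
    have hi : i = r := by
      by_contra hi
      have := dep_pos hdep hi; omega
    subst hi; rw [anc_r hdep] at hj ⊢
    exact absurd (Finset.mem_singleton.1 hj) hjr
  | succ k IH =>
    intro i hk j hj hjr
    by_cases hi : i = r
    · subst hi; rw [anc_r hdep] at hj
      exact absurd (Finset.mem_singleton.1 hj) hjr
    · rw [anc_ne hdep hi] at hj ⊢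
      rcases Finset.mem_insert.1 hj with rfl | hj
      · exact Finset.mem_insert_of_mem (anc_mem_self hdep (p j))
      · have := hdep i hi
        exact Finset.mem_insert_of_mem (IH (p i) (by omega) j hj hjr)

lemma anc_closed (i : Fin n) : ∀ j ∈ Anc r p dep i, j ≠ r → p j ∈ Anc r p dep i :=
  anc_closed_aux hdep (dep i) i le_rfl

lemma anc_not_mem_parent {i : Fin n} (hi : i ≠ r) : i ∉ Anc r p dep (p i) := by
  intro h
  have h1 := anc_dep hdep (p i) i h
  have := hdep i hi
  omega

end AncLemmas

section Construction
variable {C : Fin n → Finset ℝ}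
variable (r p dep) in
def thJ (μr : {x : ℝ // x ∈ C r} → ℝ)
    (K : (i : Fin n) → {x : ℝ // x ∈ C (p i)} → {y : ℝ // y ∈ C i} → ℝ) : Pt C → ℝ :=
  fun c => μr (c r) * ∏ i ∈ Finset.univ.erase r, K i (c (p i)) (c i)

variable {μr : {x : ℝ // x ∈ C r} → ℝ}
  {K : (i : Fin n) → {x : ℝ // x ∈ C (p i)} → {y : ℝ // y ∈ C i} → ℝ}

lemma margF1 (hdep : ∀ i, i ≠ r → dep (p i) + 1 = dep i)
    (hKsum : ∀ i, i ≠ r → ∀ x, ∑ y, K i x y = 1)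
    (A : Finset (Fin n)) (hrA : r ∈ A) (hcl : ∀ j ∈ A, j ≠ r → p j ∈ A) (γ : Pt C) :
    MargC (thJ r p μr K) (Finset.univ \ A) γ
      = μr (γ r) * ∏ i ∈ A.erase r, K i (γ (p i)) (γ i) := by
  classical
  have hsub : Finset.univ \ A ⊆ Finset.univ.erase r := by
    intro j hj
    rw [Finset.mem_sdiff] at hj
    exact Finset.mem_erase.2 ⟨fun h => hj.2 (h ▸ hrA), Finset.mem_univ _⟩
  have hner : ∀ i ∈ Finset.univ.erase r, i ≠ r := fun i hi => Finset.ne_of_mem_erase hi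
  have hstar : ∀ j ∈ Finset.univ.erase r, j ∉ Finset.univ \ A → p j ∉ Finset.univ \ A := by
    intro j hj hjS
    have hjA : j ∈ A := by
      by_contra h
      exact hjS (Finset.mem_sdiff.2 ⟨Finset.mem_univ _, h⟩)
    have := hcl j hjA (Finset.ne_of_mem_erase hj)
    intro h
    exact (Finset.mem_sdiff.1 h).2 this
  have := lemA r p dep hdep μr K hKsum (Finset.univ \ A) (Finset.univ.erase r)
    hsub hner hstar γ
  have hset : Finset.univ.erase r \ (Finset.univ \ A) = A.erase r := by
    ext a
    simp only [Finset.mem_sdiff, Finset.mem_erase, Finset.mem_univ, true_and, and_true,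
      not_and, not_not]
  rw [hset] at this
  rw [← this]
  rfl

lemma margQ (hdep : ∀ i, i ≠ r → dep (p i) + 1 = dep i)
    (hKsum : ∀ i, i ≠ r → ∀ x, ∑ y, K i x y = 1)
    {i : Fin n} (hi : i ≠ r) (δ : Pt C) :
    MargC (thJ r p μr K) ((Finset.univ.erase i).erase (p i)) δ
      = K i (δ (p i)) (δ i) * MargC (thJ r p μr K) (Finset.univ.erase (p i)) δ := by
  classical
  set q := p i with hq
  set A := Anc r p dep i with hA
  have hpne : p i ≠ i := by
    intro h; have := hdep i hi; rw [h] at this; omega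
  have hqi : q ≠ i := hpne
  have hAq : A = insert i (Anc r p dep q) := anc_ne hdep hi
  have hiA : i ∈ A := anc_mem_self hdep i
  have hqA : q ∈ A := by rw [hAq]; exact Finset.mem_insert_of_mem (anc_mem_self hdep q)
  have hrA : r ∈ A := anc_root hdep i
  have hrAq : r ∈ Anc r p dep q := anc_root hdep q
  have hiAq : i ∉ Anc r p dep q := anc_not_mem_parent hdep hi
  have hclA : ∀ j ∈ A, j ≠ r → p j ∈ A := anc_closed hdep i
  have hclAq : ∀ j ∈ Anc r p dep q, j ≠ r → p j ∈ Anc r p dep q := anc_closed hdep q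
  set S : Finset (Fin n) := (Finset.univ.erase i).erase q with hS
  have hqS : q ∉ S := Finset.notMem_erase _ _
  have hiS : i ∉ S := fun h => Finset.notMem_erase i Finset.univ (Finset.mem_of_mem_erase h)
  have hmemS : ∀ j : Fin n, j ∉ S ↔ (j = q ∨ j = i) := by
    intro j
    rw [hS]
    simp only [Finset.mem_erase, Finset.mem_univ, and_true, not_and]
    constructor
    · intro h
      by_cases h1 : j = q
      · exact Or.inl h1
      · exact Or.inr (by tauto)
    · rintro (rfl | rfl) <;> tauto
  have hsub : Finset.univ \ A ⊆ S := by
    intro j hj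
    rw [Finset.mem_sdiff] at hj
    rw [hS]
    refine Finset.mem_erase.2 ⟨fun h => hj.2 (h ▸ hqA), Finset.mem_erase.2
      ⟨fun h => hj.2 (h ▸ hiA), Finset.mem_univ _⟩⟩
  -- condition equivalence
  have hcondiff : ∀ δ' : Pt C,
      ((∀ j, j ∉ S → δ' j = δ j) ∧ (∀ j ∈ Finset.univ \ A, δ' j = δ j)) ↔
      ((∀ j, j ∉ Finset.univ.erase q → δ' j = δ j) ∧
        (∀ j ∈ Finset.univ \ Anc r p dep q, δ' j = δ j)) := by
    intro δ'
    constructor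
    · rintro ⟨h1, h2⟩
      constructor
      · intro j hj
        have : j = q := by
          simp only [Finset.mem_erase, Finset.mem_univ, and_true, not_not] at hj
          tauto
        exact h1 j (by rw [hmemS]; exact Or.inl this)
      · intro j hj
        rw [Finset.mem_sdiff] at hj
        by_cases hji : j = i
        · exact h1 j (by rw [hmemS]; exact Or.inr hji)
        · refine h2 j (Finset.mem_sdiff.2 ⟨Finset.mem_univ _, ?_⟩)
          rw [hAq]
          intro h
          rcases Finset.mem_insert.1 h with h | h
          · exact hji h
          · exact hj.2 h
    · rintro ⟨h1, h2⟩
      constructor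
      · intro j hj
        rcases (hmemS j).1 hj with h | h
        · subst h; exact h1 _ (Finset.notMem_erase _ _)
        · subst h; exact h2 _ (Finset.mem_sdiff.2 ⟨Finset.mem_univ _, hiAq⟩)
      · intro j hj
        rw [Finset.mem_sdiff, hAq] at hj
        refine h2 j (Finset.mem_sdiff.2 ⟨Finset.mem_univ _, fun h => hj.2 ?_⟩)
        exact Finset.mem_insert_of_mem h
  calc MargC (thJ r p μr K) S δ
      = ∑ δ' : Pt C, if (∀ j, j ∉ S → δ' j = δ j) ∧ (∀ j ∈ Finset.univ \ A, δ' j = δ j)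
          then MargC (thJ r p μr K) (Finset.univ \ A) δ' else 0 :=
        margC_tower _ S (Finset.univ \ A) hsub δ
    _ = ∑ δ' : Pt C, if (∀ j, j ∉ S → δ' j = δ j) ∧ (∀ j ∈ Finset.univ \ A, δ' j = δ j)
          then K i (δ q) (δ i) * MargC (thJ r p μr K) (Finset.univ \ Anc r p dep q) δ'
          else 0 := by
        refine Finset.sum_congr rfl fun δ' _ => ?_
        by_cases hcnd : (∀ j, j ∉ S → δ' j = δ j) ∧ (∀ j ∈ Finset.univ \ A, δ' j = δ j)
        · rw [if_pos hcnd, if_pos hcnd]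
          rw [margF1 hdep hKsum A hrA hclA δ', margF1 hdep hKsum _ hrAq hclAq δ']
          have hiAe : i ∈ A.erase r := Finset.mem_erase.2 ⟨hi, hiA⟩
          rw [← Finset.mul_prod_erase _ _ hiAe]
          have hsets : (A.erase r).erase i = (Anc r p dep q).erase r := by
            rw [Finset.erase_right_comm, hAq, Finset.erase_insert hiAq]
          rw [hsets]
          have hδq : δ' q = δ q := hcnd.1 q hqS
          have hδi : δ' i = δ i := hcnd.1 i hiS
          rw [hδq, hδi]
          ring
        · rw [if_neg hcnd, if_neg hcnd]
    _ = K i (δ q) (δ i) * ∑ δ' : Pt C,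
          if (∀ j, j ∉ Finset.univ.erase q → δ' j = δ j) ∧
              (∀ j ∈ Finset.univ \ Anc r p dep q, δ' j = δ j)
          then MargC (thJ r p μr K) (Finset.univ \ Anc r p dep q) δ' else 0 := by
        rw [Finset.mul_sum]
        refine Finset.sum_congr rfl fun δ' _ => ?_
        rw [if_congr (hcondiff δ') rfl rfl]
        split <;> simp
    _ = K i (δ q) (δ i) * MargC (thJ r p μr K) (Finset.univ.erase q) δ := by
        congr 1
        refine (margC_tower _ _ _ ?_ δ).symm
        intro j hj
        rw [Finset.mem_sdiff] at hj
        exact Finset.mem_erase.2 ⟨fun h => hj.2 (h ▸ anc_mem_self hdep q), Finset.mem_univ _⟩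
end Construction

section MargM
variable {C : Fin n → Finset ℝ}
variable {μU : (i : Fin n) → {x : ℝ // x ∈ C i} → ℝ}
  {K : (i : Fin n) → {x : ℝ // x ∈ C (p i)} → {y : ℝ // y ∈ C i} → ℝ}

lemma margM (hdep : ∀ i, i ≠ r → dep (p i) + 1 = dep i)
    (hKsum : ∀ i, i ≠ r → ∀ x, ∑ y, K i x y = 1)
    (hKpush : ∀ i, i ≠ r → ∀ y, ∑ x, μU (p i) x * K i x y = μU i y) :
    ∀ (i : Fin n) (γ : Pt C),
      MargC (thJ r p (μU r) K) (Finset.univ.erase i) γ = μU i (γ i) := by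
  classical
  suffices h : ∀ (k : ℕ) (i : Fin n), dep i ≤ k → ∀ γ : Pt C,
      MargC (thJ r p (μU r) K) (Finset.univ.erase i) γ = μU i (γ i) by
    intro i γ; exact h (dep i) i le_rfl γ
  have hbase : ∀ γ : Pt C,
      MargC (thJ r p (μU r) K) (Finset.univ.erase r) γ = μU r (γ r) := by
    intro γ
    have := margF1 (dep := dep) (μr := μU r) hdep hKsum {r} (Finset.mem_singleton_self r)
      (fun j hj hjr => absurd (Finset.mem_singleton.1 hj) hjr) γ
    rw [Finset.erase_eq]
    rw [this, Finset.erase_singleton, Finset.prod_empty, mul_one]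
  intro k
  induction k with
  | zero =>
    intro i hk γ
    have hi : i = r := by
      by_contra hi
      have := dep_pos hdep hi; omega
    subst hi
    exact hbase γ
  | succ k IH =>
    intro i hk γ
    by_cases hi : i = r
    · subst hi; exact hbase γ
    · have hq : dep (p i) + 1 = dep i := hdep i hi
      have hpne : p i ≠ i := by intro h; rw [h] at hq; omega
      have hqmem : p i ∈ Finset.univ.erase i :=
        Finset.mem_erase.2 ⟨hpne, Finset.mem_univ _⟩
      rw [margC_split _ _ (p i) hqmem γ]
      have hstep : ∀ y : {x : ℝ // x ∈ C (p i)},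
          MargC (thJ r p (μU r) K) ((Finset.univ.erase i).erase (p i))
            (Function.update γ (p i) y)
          = K i y (γ i) * μU (p i) y := by
        intro y
        rw [margQ hdep hKsum hi]
        rw [IH (p i) (by omega)]
        rw [Function.update_self, Function.update_of_ne (Ne.symm hpne)]
      rw [Finset.sum_congr rfl fun y _ => hstep y]
      rw [← hKpush i hi (γ i)]
      refine Finset.sum_congr rfl fun y _ => ?_
      ring
end MargM

section ProjMarg
variable {C : Fin n → Finset ℝ}

lemma projUni_eq_margC (θ : Pt C → ℝ) (i : Fin n) (x : {x : ℝ // x ∈ C i}) (γ : Pt C)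
    (hγ : γ i = x) :
    (∑ c : Pt C, if c i = x then θ c else 0) = MargC θ (Finset.univ.erase i) γ := by
  classical
  unfold MargC
  refine Finset.sum_congr rfl fun c _ => ?_
  refine if_congr ?_ rfl rfl
  constructor
  · intro h j hj
    have : j = i := by
      simpa [Finset.mem_erase] using hj
    subst this; rw [h, hγ]
  · intro h
    have := h i (Finset.notMem_erase _ _)
    rw [this, hγ]

lemma projBi_eq_margC (θ : Pt C → ℝ) (i j : Fin n) (hij : i ≠ j)
    (x : {x : ℝ // x ∈ C i}) (y : {y : ℝ // y ∈ C j}) (γ : Pt C)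
    (hγi : γ i = x) (hγj : γ j = y) :
    (∑ c : Pt C, if c i = x ∧ c j = y then θ c else 0)
      = MargC θ ((Finset.univ.erase j).erase i) γ := by
  classical
  unfold MargC
  refine Finset.sum_congr rfl fun c _ => ?_
  refine if_congr ?_ rfl rfl
  have hmem : ∀ k : Fin n, k ∉ (Finset.univ.erase j).erase i ↔ (k = i ∨ k = j) := by
    intro k
    simp only [Finset.mem_erase, Finset.mem_univ, and_true, not_and]
    constructor
    · intro h
      by_cases h1 : k = i
      · exact Or.inl h1
      · exact Or.inr (by tauto)
    · rintro (rfl | rfl) <;> tauto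
  constructor
  · rintro ⟨h1, h2⟩ k hk
    rcases (hmem k).1 hk with rfl | rfl
    · rw [h1, hγi]
    · rw [h2, hγj]
  · intro h
    constructor
    · rw [h i ((hmem i).2 (Or.inl rfl)), hγi]
    · rw [h j ((hmem j).2 (Or.inr rfl)), hγj]
end ProjMarg

section CondP
variable {X Y : Type*} [Fintype X] [Fintype Y]

def condP (β : X × Y → ℝ) (f : X → ℝ) (x : X) (y : Y) : ℝ :=
  if 0 < f x then β (x, y) / f x else (Fintype.card Y : ℝ)⁻¹

lemma condP_nonneg (β : X × Y → ℝ) (f : X → ℝ) (hβ : ∀ s, 0 ≤ β s) (x : X) (y : Y) :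
    0 ≤ condP β f x y := by
  unfold condP
  split
  · rename_i h
    exact div_nonneg (hβ _) h.le
  · positivity

lemma condP_sum [Nonempty Y] (β : X × Y → ℝ) (f : X → ℝ) (x : X)
    (hrow : ∑ y : Y, β (x, y) = f x) : ∑ y : Y, condP β f x y = 1 := by
  unfold condP
  by_cases h : 0 < f x
  · simp only [if_pos h]
    rw [← Finset.sum_div, hrow, div_self (ne_of_gt h)]
  · simp only [if_neg h]
    rw [Finset.sum_const, Finset.card_univ, nsmul_eq_mul]
    rw [mul_inv_cancel₀]
    exact_mod_cast Nat.cast_ne_zero.2 Fintype.card_ne_zero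

lemma condP_mul (β : X × Y → ℝ) (f : X → ℝ) (x : X) (y : Y) (hβ : ∀ s, 0 ≤ β s)
    (hf : 0 ≤ f x) (hrow : ∑ y : Y, β (x, y) = f x) :
    f x * condP β f x y = β (x, y) := by
  unfold condP
  by_cases h : 0 < f x
  · rw [if_pos h, mul_comm, div_mul_cancel₀ _ (ne_of_gt h)]
  · rw [if_neg h]
    have hfx : f x = 0 := le_antisymm (not_lt.1 h) hf
    have hβ0 : β (x, y) = 0 := by
      have := (Finset.sum_eq_zero_iff_of_nonneg
        (fun y _ => hβ (x, y))).1 (hrow.trans hfx) y (Finset.mem_univ y)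
      exact this
    rw [hfx, hβ0, zero_mul]
end CondP


section Graph
variable {n : ℕ} {E : Finset (Fin n × Fin n)} (hE : IsTreeEdges E) (r : Fin n)
include hE

lemma tree_parent : ∃ (p : Fin n → Fin n) (dep : Fin n → ℕ),
    (∀ i, i ≠ r → (treeGraph E).Adj i (p i) ∧ dep (p i) + 1 = dep i) ∧
    (∀ i j, (treeGraph E).Adj i j → p j = i ∨ p i = j) ∧ p r = r := by
  classical
  set G := treeGraph E with hG
  have hT : G.IsTree := hE.2
  have hunique := hT.existsUnique_path
  set P : ∀ i : Fin n, G.Walk r i := fun i => (hunique r i).exists.choose with hP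
  have hPpath : ∀ i, (P i).IsPath := fun i => (hunique r i).exists.choose_spec
  have hPuniq : ∀ (i : Fin n) (q : G.Walk r i), q.IsPath → q = P i := by
    intro i q hq
    have h1 := (hunique r i).unique hq (hPpath i)
    exact h1
  set p : Fin n → Fin n := fun i => (P i).reverse.getVert 1 with hp
  set dep : Fin n → ℕ := fun i => (P i).length with hdep
  have hnil : SimpleGraph.Walk.nil = P r := hPuniq r SimpleGraph.Walk.nil SimpleGraph.Walk.IsPath.nil
  refine ⟨p, dep, ?_, ?_, by
    rw [hp]; simp only []
    rw [← hnil, SimpleGraph.Walk.reverse_nil]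
    exact SimpleGraph.Walk.getVert_of_length_le _ (by simp)⟩
  · intro i hi
    obtain ⟨w, hadj, q, hq⟩ := SimpleGraph.Walk.exists_eq_cons_of_ne hi (P i).reverse
    have hpi : p i = w := by
      rw [hp]; simp only []
      rw [hq, SimpleGraph.Walk.getVert_cons_succ, SimpleGraph.Walk.getVert_zero]
    have hqpath : q.IsPath := by
      have h1 : (P i).reverse.IsPath := (hPpath i).reverse
      rw [hq] at h1
      exact h1.of_cons
    have hPw : q.reverse = P w := hPuniq w q.reverse hqpath.reverse
    constructor
    · rw [hpi]; exact hadj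
    · rw [hdep]; simp only []
      rw [hpi, ← hPw]
      have hlen : (P i).reverse.length = q.length + 1 := by
        rw [hq]; simp [SimpleGraph.Walk.length_cons]
      rw [SimpleGraph.Walk.length_reverse] at hlen ⊢
      omega
  · intro i j hadj
    have hij : i ≠ j := hadj.ne
    by_cases hj : j ∈ (P i).support
    · right
      have hQpath : ((P i).takeUntil j hj).IsPath := (hPpath i).takeUntil hj
      have hPj : (P i).takeUntil j hj = P j := hPuniq j _ hQpath
      have hinotin : i ∉ (P j).support := by
        rw [← hPj]
        intro hmem
        have hnodup := (hPpath i).support_nodup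
        have hspec := SimpleGraph.Walk.take_spec (P i) hj
        have hsupp : (P i).support
            = ((P i).takeUntil j hj).support ++ ((P i).dropUntil j hj).support.tail := by
          conv_lhs => rw [← hspec]
          rw [SimpleGraph.Walk.support_append]
        rw [hsupp] at hnodup
        have hdisj := List.disjoint_of_nodup_append hnodup
        have hidrop : i ∈ ((P i).dropUntil j hj).support.tail := by
          have h1 : i ∈ ((P i).dropUntil j hj).support :=
            SimpleGraph.Walk.end_mem_support _
          rw [SimpleGraph.Walk.support_eq_cons] at h1
          rcases List.mem_cons.1 h1 with h2 | h2
          · exact absurd h2.symm hij.symm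
          · exact h2
        exact hdisj hmem hidrop
      have hRpath : ((P j).concat hadj.symm).IsPath := by
        have h1 : ((P j).concat hadj.symm).reverse
            = SimpleGraph.Walk.cons hadj (P j).reverse := by
          rw [SimpleGraph.Walk.reverse_concat]
        have h2 : (SimpleGraph.Walk.cons hadj (P j).reverse).IsPath := by
          rw [SimpleGraph.Walk.cons_isPath_iff]
          refine ⟨(hPpath j).reverse, ?_⟩
          rw [SimpleGraph.Walk.support_reverse]
          intro hmem
          exact hinotin (List.mem_reverse.1 hmem)
        have h3 := h2.reverse
        rw [← h1, SimpleGraph.Walk.reverse_reverse] at h3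
        exact h3
      have hPi : (P j).concat hadj.symm = P i := hPuniq i _ hRpath
      rw [hp]; simp only []
      rw [← hPi, SimpleGraph.Walk.reverse_concat, SimpleGraph.Walk.getVert_cons_succ,
        SimpleGraph.Walk.getVert_zero]
    · left
      have hRpath : ((P i).concat hadj).IsPath := by
        have h1 : ((P i).concat hadj).reverse
            = SimpleGraph.Walk.cons hadj.symm (P i).reverse := by
          rw [SimpleGraph.Walk.reverse_concat]
        have h2 : (SimpleGraph.Walk.cons hadj.symm (P i).reverse).IsPath := by
          rw [SimpleGraph.Walk.cons_isPath_iff]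
          refine ⟨(hPpath i).reverse, ?_⟩
          rw [SimpleGraph.Walk.support_reverse]
          intro hmem
          exact hj (List.mem_reverse.1 hmem)
        have h3 := h2.reverse
        rw [← h1, SimpleGraph.Walk.reverse_reverse] at h3
        exact h3
      have hPj : (P i).concat hadj = P j := hPuniq j _ hRpath
      rw [hp]; simp only []
      rw [← hPj, SimpleGraph.Walk.reverse_concat, SimpleGraph.Walk.getVert_cons_succ,
        SimpleGraph.Walk.getVert_zero]
end Graph

section Construct
variable {C : Fin n → Finset ℝ}

lemma construct (hn : 1 ≤ n) (hC : ∀ i, (C i).Nonempty)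
    {E : Finset (Fin n × Fin n)} (hE : IsTreeEdges E)
    (μU : (i : Fin n) → {x : ℝ // x ∈ C i} → ℝ)
    (hμ0 : ∀ i x, 0 ≤ μU i x) (hμ1 : ∀ i, ∑ x, μU i x = 1)
    (θB : (i j : Fin n) → ({x : ℝ // x ∈ C i} × {y : ℝ // y ∈ C j}) → ℝ)
    (hB0 : ∀ i j, (i, j) ∈ E → ∀ s, 0 ≤ θB i j s)
    (hrow : ∀ i j, (i, j) ∈ E → ∀ x, ∑ y, θB i j (x, y) = μU i x)
    (hcol : ∀ i j, (i, j) ∈ E → ∀ y, ∑ x, θB i j (x, y) = μU j y) :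
    ∃ θ : Pt C → ℝ, (∀ c, 0 ≤ θ c) ∧ (∑ c : Pt C, θ c = 1) ∧
      (∀ i x, (∑ c : Pt C, if c i = x then θ c else 0) = μU i x) ∧
      (∀ i j, (i, j) ∈ E → ∀ x y,
        (∑ c : Pt C, if c i = x ∧ c j = y then θ c else 0) = θB i j (x, y)) := by
  classical
  haveI hne : ∀ i : Fin n, Nonempty {x : ℝ // x ∈ C i} :=
    fun i => ⟨⟨(hC i).choose, (hC i).choose_spec⟩⟩
  set r : Fin n := ⟨0, hn⟩ with hr
  obtain ⟨p, dep, hpar, hedge, hdr⟩ := tree_parent hE r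
  have hdep : ∀ i, i ≠ r → dep (p i) + 1 = dep i := fun i hi => (hpar i hi).2
  have hadj : ∀ i, i ≠ r → (treeGraph E).Adj i (p i) := fun i hi => (hpar i hi).1
  have hEor : ∀ i, i ≠ r → (i, p i) ∈ E ∨ (p i, i) ∈ E := by
    intro i hi
    have h := hadj i hi
    rw [treeGraph, SimpleGraph.fromRel_adj] at h
    exact h.2
  set K : (i : Fin n) → {x : ℝ // x ∈ C (p i)} → {y : ℝ // y ∈ C i} → ℝ :=
    fun i => if h : (p i, i) ∈ E then condP (θB (p i) i) (μU (p i))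
      else condP (fun s : {x : ℝ // x ∈ C (p i)} × {y : ℝ // y ∈ C i} =>
        θB i (p i) (s.2, s.1)) (μU (p i)) with hK
  have hKnn : ∀ i, i ≠ r → ∀ x y, 0 ≤ K i x y := by
    intro i hi x y
    simp only [hK]
    by_cases h : (p i, i) ∈ E
    · rw [dif_pos h]
      exact condP_nonneg _ _ (fun s => hB0 _ _ h s) x y
    · rw [dif_neg h]
      rcases hEor i hi with h2 | h2
      · exact condP_nonneg _ _ (fun s => hB0 _ _ h2 _) x y
      · exact absurd h2 h
  have hKsum : ∀ i, i ≠ r → ∀ x, ∑ y, K i x y = 1 := by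
    intro i hi x
    simp only [hK]
    by_cases h : (p i, i) ∈ E
    · rw [dif_pos h]
      exact condP_sum _ _ x (hrow _ _ h x)
    · rw [dif_neg h]
      rcases hEor i hi with h2 | h2
      · exact condP_sum _ _ x (hcol _ _ h2 x)
      · exact absurd h2 h
  have hKpush : ∀ i, i ≠ r → ∀ y, ∑ x, μU (p i) x * K i x y = μU i y := by
    intro i hi y
    simp only [hK]
    by_cases h : (p i, i) ∈ E
    · rw [dif_pos h]
      rw [Finset.sum_congr rfl fun x _ =>
        condP_mul _ _ x y (fun s => hB0 _ _ h s) (hμ0 _ x) (hrow _ _ h x)]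
      exact hcol _ _ h y
    · rw [dif_neg h]
      rcases hEor i hi with h2 | h2
      · rw [Finset.sum_congr rfl fun x _ =>
          condP_mul _ _ x y (fun s => hB0 _ _ h2 _) (hμ0 _ x) (hcol _ _ h2 x)]
        exact hrow _ _ h2 y
      · exact absurd h2 h
  have hKmul : ∀ i, i ≠ r → ∀ x y,
      μU (p i) x * K i x y = (if (p i, i) ∈ E then θB (p i) i (x, y) else θB i (p i) (y, x)) := by
    intro i hi x y
    simp only [hK]
    by_cases h : (p i, i) ∈ E
    · rw [dif_pos h, if_pos h]
      exact condP_mul _ _ x y (fun s => hB0 _ _ h s) (hμ0 _ x) (hrow _ _ h x)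
    · rw [dif_neg h, if_neg h]
      rcases hEor i hi with h2 | h2
      · exact condP_mul _ _ x y (fun s => hB0 _ _ h2 _) (hμ0 _ x) (hcol _ _ h2 x)
      · exact absurd h2 h
  set θ : Pt C → ℝ := thJ r p (μU r) K with hθ
  set γ0 : Pt C := fun i => Classical.arbitrary _ with hγ0
  have hmargU : ∀ (i : Fin n) (γ : Pt C),
      MargC θ (Finset.univ.erase i) γ = μU i (γ i) :=
    margM hdep hKsum hKpush
  have hU : ∀ i x, (∑ c : Pt C, if c i = x then θ c else 0) = μU i x := by
    intro i x
    rw [projUni_eq_margC θ i x (Function.update γ0 i x) (Function.update_self _ _ _)]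
    rw [hmargU i _, Function.update_self]
  refine ⟨θ, ?_, ?_, hU, ?_⟩
  · intro c
    rw [hθ]
    unfold thJ
    apply mul_nonneg (hμ0 r (c r))
    exact Finset.prod_nonneg fun i hi => hKnn i (Finset.ne_of_mem_erase hi) _ _
  · have e1 : ∑ c : Pt C, θ c
        = ∑ x : {x : ℝ // x ∈ C r}, ∑ c : Pt C, if c r = x then θ c else 0 := by
      rw [Finset.sum_comm]
      refine Finset.sum_congr rfl fun c _ => ?_
      rw [Finset.sum_ite_eq]
      simp
    rw [e1, Finset.sum_congr rfl fun x _ => hU r x]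
    exact hμ1 r
  · intro i j hij x y
    have hlt : i < j := hE.1 (i, j) hij
    have hijne : i ≠ j := Fin.ne_of_lt hlt
    have hadjij : (treeGraph E).Adj i j := by
      rw [treeGraph, SimpleGraph.fromRel_adj]
      exact ⟨hijne, Or.inl hij⟩
    set γ : Pt C := Function.update (Function.update γ0 i x) j y with hγ
    have hγi : γ i = x := by
      rw [hγ, Function.update_of_ne hijne, Function.update_self]
    have hγj : γ j = y := by rw [hγ, Function.update_self]
    rw [projBi_eq_margC θ i j hijne x y γ hγi hγj]
    rcases hedge i j hadjij with hpj | hpi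
    · -- p j = i
      have hjr : j ≠ r := by
        intro h
        rw [h, hdr] at hpj
        exact hijne (hpj.symm.trans h.symm)
      subst hpj
      rw [margQ hdep hKsum hjr γ, hmargU (p j) γ, hγi, hγj]
      have := hKmul j hjr x y
      rw [if_pos hij] at this
      rw [mul_comm] at this
      exact this
    · -- p i = j
      have hir : i ≠ r := by
        intro h
        rw [h, hdr] at hpi
        exact hijne (h.trans hpi)
      subst hpi
      have hset : (Finset.univ.erase (p i)).erase i
          = (Finset.univ.erase i).erase (p i) := Finset.erase_right_comm
      rw [hset, margQ hdep hKsum hir γ, hmargU (p i) γ, hγi, hγj]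
      have hnmem : (p i, i) ∉ E := by
        intro h
        have := hE.1 (p i, i) h
        simp only at this
        exact absurd hlt (not_lt.2 this.le)
      have := hKmul i hir y x
      rw [if_neg hnmem] at this
      rw [mul_comm] at this
      exact this
end Construct


section Glue
variable {n : ℕ} {C : Fin n → Finset ℝ}

lemma projBi_rowsum (θ : Pt C → ℝ) (i j : Fin n) (x : {x : ℝ // x ∈ C i}) :
    ∑ y : {y : ℝ // y ∈ C j}, projBi θ i j (x, y) = projUni θ i x := by
  classical
  unfold projBi projUni
  rw [Finset.sum_comm]
  refine Finset.sum_congr rfl fun c _ => ?_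
  by_cases h : c i = x
  · rw [if_pos h]
    have e : ∀ y : {y : ℝ // y ∈ C j},
        (if c i = x ∧ c j = y then θ c else 0) = (if c j = y then θ c else 0) :=
      fun y => if_congr (and_iff_right h) rfl rfl
    rw [Finset.sum_congr rfl fun y _ => e y, Finset.sum_ite_eq]
    simp
  · rw [if_neg h]
    exact Finset.sum_eq_zero fun y _ => if_neg (fun hc : _ ∧ _ => h hc.1)

lemma projBi_colsum (θ : Pt C → ℝ) (i j : Fin n) (y : {y : ℝ // y ∈ C j}) :
    ∑ x : {x : ℝ // x ∈ C i}, projBi θ i j (x, y) = projUni θ j y := by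
  classical
  unfold projBi projUni
  rw [Finset.sum_comm]
  refine Finset.sum_congr rfl fun c _ => ?_
  by_cases h : c j = y
  · rw [if_pos h]
    have e : ∀ x : {x : ℝ // x ∈ C i},
        (if c i = x ∧ c j = y then θ c else 0) = (if c i = x then θ c else 0) :=
      fun x => if_congr (and_iff_left h) rfl rfl
    rw [Finset.sum_congr rfl fun x _ => e x, Finset.sum_ite_eq]
    simp
  · rw [if_neg h]
    exact Finset.sum_eq_zero fun x _ => if_neg (fun hc : _ ∧ _ => h hc.2)
end Glue
end DevAux

/-- Theorem 2.1: on a tree, feasibility of the exponential-size problem (over0) is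
equivalent to feasibility of the polynomial-size problem (over1) for every `ρ ≥ 0`;
consequently the two optimal values coincide. -/

theorem feas_iff {n : ℕ} (hn : 1 ≤ n) {C : Fin n → Finset ℝ} (hC : ∀ i, (C i).Nonempty)
    (E : Finset (Fin n × Fin n)) (hE : IsTreeEdges E)
    (μU : (i : Fin n) → {x : ℝ // x ∈ C i} → ℝ) (hμU : ∀ i, IsPmf (μU i))
    (μB : (i j : Fin n) → ({x : ℝ // x ∈ C i} × {y : ℝ // y ∈ C j}) → ℝ)
    (ρ : ℝ) : FeasA E μU μB ρ ↔ FeasB E μU μB ρ := by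
  constructor
  · rintro ⟨θ, θB, hJ, hU, hPmf, hProj, hVan, hKL⟩
    refine ⟨θB, hPmf, ?_, ?_, hVan, hKL⟩
    · intro i j hij x
      rw [← hProj i j hij]
      rw [projBi_rowsum θ i j x, hU i]
    · intro i j hij y
      rw [← hProj i j hij]
      rw [projBi_colsum θ i j y, hU j]
  · rintro ⟨θB, hPmf, hrow, hcol, hVan, hKL⟩
    obtain ⟨θ, h0, h1, hU, hB⟩ := construct hn hC hE μU
      (fun i x => (hμU i).1 x) (fun i => (hμU i).2) θB
      (fun i j hij s => (hPmf i j hij).1 s) hrow hcol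
    have hUni : ∀ i, projUni θ i = μU i := by
      intro i; funext x; exact hU i x
    have hBi : ∀ i j, (i, j) ∈ E → projBi θ i j = θB i j := by
      intro i j hij
      funext s
      obtain ⟨x, y⟩ := s
      exact hB i j hij x y
    exact ⟨θ, θB, ⟨h0, h1⟩, hUni, hPmf, hBi, hVan, hKL⟩

theorem stmt0
    (n : ℕ) (hn : 1 ≤ n) (C : Fin n → Finset ℝ) (hC : ∀ i, (C i).Nonempty)
    (E : Finset (Fin n × Fin n)) (hE : IsTreeEdges E)
    (μU : (i : Fin n) → {x : ℝ // x ∈ C i} → ℝ) (hμU : ∀ i, IsPmf (μU i))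
    (μB : (i j : Fin n) → ({x : ℝ // x ∈ C i} × {y : ℝ // y ∈ C j}) → ℝ)
    (hμB : ∀ i j, (i, j) ∈ E → IsPmf (μB i j)) :
    (∀ ρ : ℝ, 0 ≤ ρ → (FeasA E μU μB ρ ↔ FeasB E μU μB ρ)) ∧
    sInf {ρ : ℝ | 0 ≤ ρ ∧ FeasA E μU μB ρ} = sInf {ρ : ℝ | 0 ≤ ρ ∧ FeasB E μU μB ρ} := by
  have hiff : ∀ ρ : ℝ, FeasA E μU μB ρ ↔ FeasB E μU μB ρ :=
    fun ρ => feas_iff hn hC E hE μU hμU μB ρ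
  constructor
  · intro ρ _; exact hiff ρ
  · have hset : {ρ : ℝ | 0 ≤ ρ ∧ FeasA E μU μB ρ} = {ρ : ℝ | 0 ≤ ρ ∧ FeasB E μU μB ρ} := by
      ext ρ
      simp only [Set.mem_setOf_eq]
      exact and_congr_right fun _ => hiff ρ
    rw [hset]
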